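/- Let k ≥ 1 and m ∈ {1, ..., k}. Let Z = (Z_1, ..., Z_k) be a random vector whose coordinates are independent, each with the standard Laplace distribution (law with density z ↦ (1/2)·e^{−|z|} with respect to Lebesgue measure on ℝ). Let A be a nonempty finite subset of {0,1}^k such that every a ∈ A satisfies ∑_{i=1}^k a_i ≤ m. Then E[ max_{a ∈ A} ⟨a, Z⟩ ] ≤ m · ∑_{i=1}^k 1/i ≤ m · (1 + log k). -/

import Mathlib

open MeasureTheory ProbabilityTheory Real Set Filter

/-- The standard Laplace distribution: the measure on `ℝ` with density
`z ↦ (1/2) * exp (-|z|)` with respect to Lebesgue measure. -/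
noncomputable def laplaceMeasure : Measure ℝ :=
  volume.withDensity fun z => ENNReal.ofReal ((1 / 2) * Real.exp (-|z|))

section Aux

lemma laplace_cont : Continuous fun x : ℝ => (1 / 2) * Real.exp (-|x|) := by
  fun_prop

lemma laplace_interval {t : ℝ} (ht : 0 ≤ t) :
    ∫ x in (-t)..t, (1 / 2) * Real.exp (-|x|) = 1 - Real.exp (-t) := by
  have hint : ∀ a b : ℝ, IntervalIntegrable (fun x => (1/2) * Real.exp (-|x|)) volume a b :=
    fun a b => laplace_cont.intervalIntegrable a b
  rw [← intervalIntegral.integral_add_adjacent_intervals (b := 0) (hint _ _) (hint _ _)]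
  have h1 : ∫ x in (-t)..0, (1/2) * Real.exp (-|x|) = ∫ x in (-t)..0, (1/2) * Real.exp x := by
    apply intervalIntegral.integral_congr
    intro x hx
    rw [Set.uIcc_of_le (by linarith)] at hx
    show (1/2) * Real.exp (-|x|) = (1/2) * Real.exp x
    rw [abs_of_nonpos hx.2, neg_neg]
  have h2 : ∫ x in (0:ℝ)..t, (1/2) * Real.exp (-|x|) = ∫ x in (0:ℝ)..t, (1/2) * Real.exp (-x) := by
    apply intervalIntegral.integral_congr
    intro x hx
    rw [Set.uIcc_of_le ht] at hx
    show (1/2) * Real.exp (-|x|) = (1/2) * Real.exp (-x)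
    rw [abs_of_nonneg hx.1]
  have h3 : ∫ x in (0:ℝ)..t, (1/2) * Real.exp (-x) = ∫ x in (-t)..0, (1/2) * Real.exp x := by
    have := intervalIntegral.integral_comp_neg (a := (0:ℝ)) (b := t)
      (fun x => (1/2) * Real.exp x)
    simpa using this
  rw [h1, h2, h3, intervalIntegral.integral_const_mul, integral_exp]
  simp
  ring

lemma laplace_cdf {t : ℝ} (ht : 0 ≤ t) :
    laplaceMeasure {x : ℝ | |x| ≤ t} = ENNReal.ofReal (1 - Real.exp (-t)) := by
  have hset : {x : ℝ | |x| ≤ t} = Set.Icc (-t) t := by ext x; simp [abs_le]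
  rw [hset, laplaceMeasure, withDensity_apply _ measurableSet_Icc,
    ← ofReal_integral_eq_lintegral_ofReal laplace_cont.integrableOn_Icc
      (Filter.Eventually.of_forall fun x => by positivity),
    MeasureTheory.integral_Icc_eq_integral_Ioc, ← intervalIntegral.integral_of_le (by linarith),
    laplace_interval ht]

lemma integrable_comp_abs' {g : ℝ → ℝ} (h : IntegrableOn (fun x => g |x|) (Set.Ioi 0)) :
    Integrable fun x : ℝ => g |x| := by
  have int_Iic : IntegrableOn (fun x ↦ g |x|) (Iic 0) := by
    rw [← Measure.map_neg_eq_self (volume : Measure ℝ)]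
    have m : MeasurableEmbedding fun x : ℝ => -x := (Homeomorph.neg ℝ).measurableEmbedding
    rw [m.integrableOn_map_iff]
    simp_rw [Function.comp_def, abs_neg, neg_preimage, neg_Iic, neg_zero]
    exact Iff.mpr integrableOn_Ici_iff_integrableOn_Ioi h
  have := int_Iic.union h
  rwa [Set.Iic_union_Ioi, integrableOn_univ] at this

lemma xexp_bound {x : ℝ} (hx : 0 < x) : x * (1/2 * Real.exp (-x)) ≤ Real.exp (-(1/2) * x) := by
  have h1 : x/2 + 1 ≤ Real.exp (x/2) := Real.add_one_le_exp _
  have h2 : Real.exp (-x) = Real.exp (-(1/2)*x) * Real.exp (-(1/2)*x) := by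
    rw [← Real.exp_add]; ring_nf
  have h3 : Real.exp (-(1/2)*x) * Real.exp (x/2) = 1 := by
    rw [← Real.exp_add]; ring_nf; exact Real.exp_zero
  nlinarith [Real.exp_pos (-(1/2)*x), Real.exp_pos (x/2)]

lemma laplace_moment_integrable :
    Integrable (fun x : ℝ => |x| * (1/2 * Real.exp (-|x|))) volume := by
  apply integrable_comp_abs' (g := fun u => u * (1/2 * Real.exp (-u)))
  have : IntegrableOn (fun x : ℝ => x * (1/2 * Real.exp (-x))) (Ioi 0) := by
    apply ((exp_neg_integrableOn_Ioi 0 (by norm_num : (0:ℝ) < 1/2))).mono'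
    · exact (continuous_id.mul
        (continuous_const.mul (Real.continuous_exp.comp continuous_neg))).aestronglyMeasurable
    · rw [ae_restrict_iff' measurableSet_Ioi]
      exact Filter.Eventually.of_forall fun x hx => by
        rw [Real.norm_eq_abs, abs_of_nonneg (mul_nonneg (le_of_lt hx) (by positivity))]
        exact xexp_bound hx
  exact this.congr_fun (fun x hx => by rw [abs_of_pos hx]) measurableSet_Ioi

lemma laplace_density_meas :
    Measurable fun z : ℝ => ENNReal.ofReal ((1 / 2) * Real.exp (-|z|)) := by
  fun_prop

lemma laplace_id_integrable : Integrable (fun x : ℝ => x) laplaceMeasure := by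
  rw [laplaceMeasure, integrable_withDensity_iff laplace_density_meas
    (Filter.Eventually.of_forall fun x => ENNReal.ofReal_lt_top)]
  apply laplace_moment_integrable.mono'
    (measurable_id.mul (laplace_density_meas.ennreal_toReal)).aestronglyMeasurable
  refine Filter.Eventually.of_forall fun x => ?_
  simp only [Pi.mul_apply, id_eq]
  rw [ENNReal.toReal_ofReal (by positivity), Real.norm_eq_abs, abs_mul]
  rw [abs_of_nonneg (by positivity : (0:ℝ) ≤ 1/2 * Real.exp (-|x|))]

lemma term_integrable (j : ℕ) :
    IntegrableOn (fun t : ℝ => Real.exp (-t) * (1 - Real.exp (-t)) ^ j) (Ioi 0) := by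
  have hb : IntegrableOn (fun t : ℝ => Real.exp (-1 * t)) (Ioi (0:ℝ)) :=
    exp_neg_integrableOn_Ioi 0 one_pos
  have hc : Continuous fun t : ℝ => Real.exp (-t) * (1 - Real.exp (-t)) ^ j := by continuity
  apply hb.mono' hc.aestronglyMeasurable.restrict
  rw [ae_restrict_iff' measurableSet_Ioi]
  refine Filter.Eventually.of_forall fun t ht => ?_
  have h1 : 0 ≤ 1 - Real.exp (-t) := by
    have : Real.exp (-t) ≤ 1 := Real.exp_le_one_iff.mpr (by linarith [Set.mem_Ioi.mp ht])
    linarith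
  have h2 : (1 - Real.exp (-t)) ^ j ≤ 1 := pow_le_one₀ h1 (by linarith [Real.exp_pos (-t)])
  rw [Real.norm_eq_abs, abs_of_nonneg (by positivity), neg_one_mul]
  nlinarith [Real.exp_pos (-t)]

lemma term_integral (j : ℕ) :
    ∫ t in Ioi (0:ℝ), Real.exp (-t) * (1 - Real.exp (-t)) ^ j = 1 / (j + 1) := by
  have hderiv : ∀ t ∈ Ici (0:ℝ), HasDerivAt
      (fun t => (1 - Real.exp (-t)) ^ (j+1) / (j+1))
      (Real.exp (-t) * (1 - Real.exp (-t)) ^ j) t := by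
    intro t _
    have h1 : HasDerivAt (fun t : ℝ => 1 - Real.exp (-t)) (Real.exp (-t)) t := by
      have := ((Real.hasDerivAt_exp (-t)).comp t (hasDerivAt_neg t)).const_sub 1
      simpa using this
    have := (h1.pow (j+1)).div_const ((j:ℝ)+1)
    refine this.congr_deriv ?_
    push_cast
    field_simp
  have htend : Tendsto (fun t : ℝ => (1 - Real.exp (-t)) ^ (j+1) / (j+1)) atTop
      (nhds (1 / (j+1))) := by
    have h0 : Tendsto (fun t : ℝ => Real.exp (-t)) atTop (nhds 0) := by
      simpa using Real.tendsto_exp_neg_atTop_nhds_zero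
    have := ((h0.const_sub 1).pow (j+1)).div_const ((j:ℝ)+1)
    simpa using this
  have := integral_Ioi_of_hasDerivAt_of_tendsto' hderiv (term_integrable j) htend
  simpa using this

lemma tail_integral (k : ℕ) :
    ∫ t in Ioi (0:ℝ), (1 - (1 - Real.exp (-t)) ^ k) =
      ∑ j ∈ Finset.range k, 1 / ((j:ℝ) + 1) := by
  rw [setIntegral_congr_fun measurableSet_Ioi
    (g := fun t => ∑ j ∈ Finset.range k, Real.exp (-t) * (1 - Real.exp (-t)) ^ j) ?_]
  · rw [integral_finset_sum _ fun j _ => term_integrable j]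
    exact Finset.sum_congr rfl fun j _ => term_integral j
  · intro t _
    have h := geom_sum_mul ((1:ℝ) - Real.exp (-t)) k
    have hms : ∑ j ∈ Finset.range k, Real.exp (-t) * (1 - Real.exp (-t)) ^ j
        = Real.exp (-t) * ∑ j ∈ Finset.range k, (1 - Real.exp (-t)) ^ j := by
      rw [Finset.mul_sum]
    show 1 - (1 - Real.exp (-t)) ^ k
        = ∑ j ∈ Finset.range k, Real.exp (-t) * (1 - Real.exp (-t)) ^ j
    rw [hms]
    nlinarith [h]

lemma integrable_sup'' {Ω ι : Type*} [MeasurableSpace Ω] {μ : Measure Ω} {s : Finset ι}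
    (hs : s.Nonempty) {f : ι → Ω → ℝ} (hmeas : ∀ i ∈ s, Measurable (f i))
    (hint : ∀ i ∈ s, Integrable (f i) μ) :
    Integrable (fun ω => s.sup' hs fun i => f i ω) μ := by
  have hfun : (fun ω => s.sup' hs fun i => f i ω) = s.sup' hs f :=
    funext fun ω => (Finset.sup'_apply hs f ω).symm
  rw [hfun]
  apply (integrable_finset_sum s fun i hi => (hint i hi).abs).mono'
    (Finset.measurable_sup' hs hmeas).aestronglyMeasurable
  refine Filter.Eventually.of_forall fun ω => ?_
  rw [Finset.sup'_apply, Real.norm_eq_abs, abs_le]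
  obtain ⟨i0, hi0⟩ := hs
  constructor
  · have h1 : |f i0 ω| ≤ ∑ i ∈ s, |f i ω| :=
      Finset.single_le_sum (f := fun i => |f i ω|) (fun j _ => abs_nonneg _) hi0
    have h2 : -(|f i0 ω|) ≤ f i0 ω := neg_abs_le _
    have h3 := Finset.le_sup' (fun i => f i ω) hi0
    linarith
  · exact Finset.sup'_le _ _ fun i hi =>
      (le_abs_self _).trans
        (Finset.single_le_sum (f := fun i => |f i ω|) (fun j _ => abs_nonneg _) hi)

end Aux

theorem stmt10 {Ω : Type*} [MeasurableSpace Ω] (μ : Measure Ω) [IsProbabilityMeasure μ]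
    (k m : ℕ) (hk : 1 ≤ k) (hm : 1 ≤ m) (hmk : m ≤ k)
    (Z : Fin k → Ω → ℝ) (hZ : ∀ i, Measurable (Z i))
    (hlaw : ∀ i, Measure.map (Z i) μ = laplaceMeasure)
    (hind : iIndepFun Z μ)
    (A : Finset (Fin k → ℝ)) (hA : A.Nonempty)
    (hA01 : ∀ a ∈ A, ∀ i, a i = 0 ∨ a i = 1)
    (hAm : ∀ a ∈ A, ∑ i, a i ≤ (m : ℝ)) :
    (∫ ω, A.sup' hA (fun a => ∑ i, a i * Z i ω) ∂μ
        ≤ (m : ℝ) * ∑ i ∈ Finset.range k, 1 / ((i : ℝ) + 1)) ∧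
      (m : ℝ) * ∑ i ∈ Finset.range k, 1 / ((i : ℝ) + 1) ≤ (m : ℝ) * (1 + Real.log k) := by
  haveI : Nonempty (Fin k) := ⟨⟨0, hk⟩⟩
  -- Part 2 first
  have hpart2 : (∑ i ∈ Finset.range k, 1 / ((i : ℝ) + 1)) ≤ 1 + Real.log k := by
    have h := harmonic_le_one_add_log k
    have hcast : ((harmonic k : ℚ) : ℝ) = ∑ i ∈ Finset.range k, 1 / ((i : ℝ) + 1) := by
      rw [harmonic]
      push_cast
      simp [one_div]
    calc ∑ i ∈ Finset.range k, 1 / ((i : ℝ) + 1) = ((harmonic k : ℚ) : ℝ) := hcast.symm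
      _ ≤ 1 + Real.log k := h
  refine ⟨?_, mul_le_mul_of_nonneg_left hpart2 (by positivity)⟩
  -- Setup
  set M : Ω → ℝ := fun ω => Finset.univ.sup' Finset.univ_nonempty (fun i : Fin k => |Z i ω|)
    with hMdef
  have hMfun : M = Finset.univ.sup' Finset.univ_nonempty (fun (i : Fin k) (ω : Ω) => |Z i ω|) :=
    funext fun ω =>
      (Finset.sup'_apply Finset.univ_nonempty (fun (i : Fin k) (ω : Ω) => |Z i ω|) ω).symm
  have hMmeas : Measurable M := by
    rw [hMfun]
    exact Finset.measurable_sup' Finset.univ_nonempty (fun i _ => (hZ i).abs)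
  have hM0 : ∀ ω, 0 ≤ M ω := fun ω =>
    (abs_nonneg _).trans (Finset.le_sup' (fun i : Fin k => |Z i ω|)
      (Finset.mem_univ (⟨0, hk⟩ : Fin k)))
  have hZint : ∀ i, Integrable (Z i) μ := by
    intro i
    have h := laplace_id_integrable
    rw [← hlaw i] at h
    exact (integrable_map_measure aestronglyMeasurable_id (hZ i).aemeasurable).mp h
  have hMint : Integrable M μ :=
    integrable_sup'' Finset.univ_nonempty (fun i _ => (hZ i).abs)
      (fun i _ => (hZint i).abs)
  -- the key identity : ∫ M = harmonic k
  have habs_meas : ∀ t : ℝ, MeasurableSet {x : ℝ | |x| ≤ t} := fun t =>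
    measurable_abs measurableSet_Iic
  have hprod : ∀ t : ℝ, 0 ≤ t →
      μ {ω | M ω ≤ t} = ENNReal.ofReal ((1 - Real.exp (-t)) ^ k) := by
    intro t ht
    have hset : {ω | M ω ≤ t} = ⋂ i, (Z i) ⁻¹' {x : ℝ | |x| ≤ t} := by
      ext ω
      simp [hMdef, Finset.sup'_le_iff, Set.mem_iInter]
    rw [hset, hind.meas_iInter (fun i => ⟨{x : ℝ | |x| ≤ t}, habs_meas t, rfl⟩)]
    have hone : ∀ i : Fin k, μ ((Z i) ⁻¹' {x : ℝ | |x| ≤ t})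
        = ENNReal.ofReal (1 - Real.exp (-t)) := by
      intro i
      rw [← Measure.map_apply (hZ i) (habs_meas t), hlaw i, laplace_cdf ht]
    simp only [hone, Finset.prod_const, Finset.card_univ, Fintype.card_fin]
    rw [← ENNReal.ofReal_pow (by
      have : Real.exp (-t) ≤ 1 := Real.exp_le_one_iff.mpr (by linarith)
      linarith)]
  have hexp01 : ∀ t : ℝ, 0 ≤ t → 0 ≤ 1 - Real.exp (-t) ∧ (1 - Real.exp (-t)) ≤ 1 := by
    intro t ht
    have h1 : Real.exp (-t) ≤ 1 := Real.exp_le_one_iff.mpr (by linarith)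
    have h2 : 0 < Real.exp (-t) := Real.exp_pos _
    constructor <;> linarith
  have htail : ∀ t : ℝ, 0 < t →
      (μ {ω | t < M ω}).toReal = 1 - (1 - Real.exp (-t)) ^ k := by
    intro t ht
    have hc : {ω | t < M ω} = {ω | M ω ≤ t}ᶜ := by ext ω; simp [not_le]
    have hms : MeasurableSet {ω | M ω ≤ t} := hMmeas measurableSet_Iic
    rw [hc, measure_compl hms (measure_ne_top μ _), hprod t ht.le, measure_univ]
    have hle1 : ENNReal.ofReal ((1 - Real.exp (-t)) ^ k) ≤ 1 :=
      ENNReal.ofReal_le_one.mpr (pow_le_one₀ (hexp01 t ht.le).1 (hexp01 t ht.le).2)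
    rw [ENNReal.toReal_sub_of_le hle1 ENNReal.one_ne_top, ENNReal.toReal_one,
      ENNReal.toReal_ofReal (pow_nonneg (hexp01 t ht.le).1 k)]
  have hkey : ∫ ω, M ω ∂μ = ∑ j ∈ Finset.range k, 1 / ((j:ℝ) + 1) := by
    rw [hMint.integral_eq_integral_meas_lt (ae_of_all _ hM0)]
    rw [setIntegral_congr_fun measurableSet_Ioi
      (f := fun t => μ.real {a | t < M a}) (g := fun t => 1 - (1 - Real.exp (-t)) ^ k) (fun t ht => htail t ht)]
    exact tail_integral k
  -- pointwise bound
  have hpt : ∀ ω, A.sup' hA (fun a => ∑ i, a i * Z i ω) ≤ (m:ℝ) * M ω := by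
    intro ω
    apply Finset.sup'_le
    intro a ha
    have hterm : ∀ i : Fin k, a i * Z i ω ≤ a i * M ω := by
      intro i
      rcases hA01 a ha i with h0 | h1
      · simp [h0]
      · rw [h1, one_mul, one_mul]
        exact (le_abs_self _).trans (Finset.le_sup' (fun i : Fin k => |Z i ω|) (Finset.mem_univ i))
    calc ∑ i, a i * Z i ω ≤ ∑ i, a i * M ω := Finset.sum_le_sum fun i _ => hterm i
      _ = (∑ i, a i) * M ω := by rw [Finset.sum_mul]
      _ ≤ (m:ℝ) * M ω := mul_le_mul_of_nonneg_right (hAm a ha) (hM0 ω)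
  -- integrability of the sup
  have hsummeas : ∀ a : Fin k → ℝ, Measurable (fun ω => ∑ i, a i * Z i ω) := fun a =>
    Finset.measurable_sum _ fun i _ => (hZ i).const_mul (a i)
  have hsumint : ∀ a : Fin k → ℝ, Integrable (fun ω => ∑ i, a i * Z i ω) μ := fun a =>
    integrable_finset_sum _ fun i _ => (hZint i).const_mul (a i)
  have hsupint : Integrable (fun ω => A.sup' hA (fun a => ∑ i, a i * Z i ω)) μ :=
    integrable_sup'' hA (fun a _ => hsummeas a) (fun a _ => hsumint a)
  calc ∫ ω, A.sup' hA (fun a => ∑ i, a i * Z i ω) ∂μ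
      ≤ ∫ ω, (m:ℝ) * M ω ∂μ :=
        integral_mono hsupint (hMint.const_mul _) hpt
    _ = (m:ℝ) * ∫ ω, M ω ∂μ := integral_const_mul _ _
    _ = (m:ℝ) * ∑ i ∈ Finset.range k, 1 / ((i : ℝ) + 1) := by rw [hkey]
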